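/- Let π : X → Y be a continuous surjection between compact metric spaces. Then the set J_m := { y ∈ Y : card(π⁻¹({y})) ≤ m } is a G_δ subset of Y, and the set I_m := { x ∈ X : card(π⁻¹({π(x)})) ≤ m } is a G_δ subset of X, and I_m = π⁻¹(J_m). -/
import Mathlib


open Metric Set

/-- The set of `y` whose fiber contains `m+1` points pairwise at distance at least `ε`
is closed (it's the continuous image of a compact set). -/
lemma badSet_isClosed
    {X Y : Type*} [MetricSpace X] [CompactSpace X] [MetricSpace Y]
    (π : X → Y) (hπ : Continuous π) (m : ℕ) (ε : ℝ) :
    IsClosed {y : Y | ∃ v : Fin (m + 1) → X, (∀ i, π (v i) = y) ∧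
      ∀ i j, i ≠ j → ε ≤ dist (v i) (v j)} := by
  set K : Set (Fin (m + 1) → X) :=
    {v | (∀ i, π (v i) = π (v 0)) ∧ ∀ i j, i ≠ j → ε ≤ dist (v i) (v j)} with hK
  have hKeq : K = (⋂ i, {v : Fin (m + 1) → X | π (v i) = π (v 0)}) ∩
      ⋂ i, ⋂ j, ⋂ _ : i ≠ j, {v : Fin (m + 1) → X | ε ≤ dist (v i) (v j)} := by
    ext v
    simp [hK, mem_iInter, mem_setOf_eq]
  have hKclosed : IsClosed K := by
    rw [hKeq]
    apply IsClosed.inter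
    · refine isClosed_iInter fun i => ?_
      exact isClosed_eq (hπ.comp (continuous_apply i)) (hπ.comp (continuous_apply 0))
    · refine isClosed_iInter fun i => isClosed_iInter fun j => isClosed_iInter fun _ => ?_
      exact isClosed_le continuous_const
        (Continuous.dist (continuous_apply i) (continuous_apply j))
  have hKcpt : IsCompact K := hKclosed.isCompact
  have himg : {y : Y | ∃ v : Fin (m + 1) → X, (∀ i, π (v i) = y) ∧
      ∀ i j, i ≠ j → ε ≤ dist (v i) (v j)} = (fun v => π (v 0)) '' K := by
    ext y
    constructor
    · rintro ⟨v, hv1, hv2⟩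
      exact ⟨v, ⟨fun i => by rw [hv1 i, hv1 0], hv2⟩, hv1 0⟩
    · rintro ⟨v, ⟨hv1, hv2⟩, rfl⟩
      exact ⟨v, hv1, hv2⟩
  rw [himg]
  exact (hKcpt.image (hπ.comp (continuous_apply 0))).isClosed

theorem mjectivity_points_Gdelta
    {X Y : Type*} [MetricSpace X] [CompactSpace X] [MetricSpace Y] [CompactSpace Y]
    (π : X → Y) (hπ : Continuous π) (hsurj : Function.Surjective π) (m : ℕ) (hm : 1 ≤ m) :
    IsGδ {y : Y | Cardinal.mk (π ⁻¹' {y}) ≤ m} ∧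
    IsGδ {x : X | Cardinal.mk (π ⁻¹' {π x}) ≤ m} ∧
    {x : X | Cardinal.mk (π ⁻¹' {π x}) ≤ m} = π ⁻¹' {y : Y | Cardinal.mk (π ⁻¹' {y}) ≤ m} := by
  classical
  set B : ℕ → Set Y := fun n =>
    {y : Y | ∃ v : Fin (m + 1) → X, (∀ i, π (v i) = y) ∧
      ∀ i j, i ≠ j → (1 : ℝ) / (n + 1) ≤ dist (v i) (v j)} with hB
  have hJ : {y : Y | Cardinal.mk (π ⁻¹' {y}) ≤ m} = ⋂ n : ℕ, (B n)ᶜ := by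
    ext y
    simp only [mem_iInter, mem_compl_iff, mem_setOf_eq]
    rw [Cardinal.mk_le_iff_forall_finset_subset_card_le]
    constructor
    · rintro hle n ⟨v, hv1, hv2⟩
      have hinj : Function.Injective v := by
        intro i j hij
        by_contra hne
        have h1 := hv2 i j hne
        rw [hij, dist_self] at h1
        have h2 : (0 : ℝ) < 1 / (n + 1) := by positivity
        linarith
      have := hle (Finset.univ.image v) (by
        intro x hx
        simp only [Finset.coe_image, Finset.coe_univ, image_univ, mem_range] at hx
        obtain ⟨i, rfl⟩ := hx
        exact hv1 i)
      rw [Finset.card_image_of_injective _ hinj, Finset.card_univ, Fintype.card_fin] at this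
      omega
    · intro h
      by_contra hgt
      push_neg at hgt
      obtain ⟨s, hs, hcard⟩ := hgt
      obtain ⟨t, hts, htcard⟩ := Finset.exists_subset_card_eq (show m + 1 ≤ s.card by omega)
      let f : Fin (m + 1) ≃ {x // x ∈ t} := (t.equivFinOfCardEq htcard).symm
      have hfinj : Function.Injective fun i => (f i : X) := by
        intro i j hij
        exact f.injective (Subtype.ext hij)
      have hfib : ∀ i, π (f i : X) = y := fun i => hs (hts (f i).2)
      -- minimum pairwise distance
      set P : Finset (Fin (m + 1) × Fin (m + 1)) :=
        Finset.univ.filter (fun p => p.1 ≠ p.2) with hP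
      have hne : P.Nonempty := by
        refine ⟨(0, 1), ?_⟩
        simp only [hP, Finset.mem_filter, Finset.mem_univ, true_and]
        intro h01
        have : (0 : Fin (m + 1)).val = (1 : Fin (m + 1)).val := congrArg Fin.val h01
        simp [Fin.val_one, Nat.mod_eq_of_lt (Nat.succ_lt_succ hm)] at this
      set ε := P.inf' hne (fun p => dist (f p.1 : X) (f p.2 : X)) with hε
      have hεpos : 0 < ε := by
        rw [hε, Finset.lt_inf'_iff]
        rintro ⟨i, j⟩ hij
        rw [hP, Finset.mem_filter] at hij
        exact dist_pos.mpr fun hc => hij.2 (hfinj hc)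
      obtain ⟨n, hn⟩ := exists_nat_one_div_lt hεpos
      refine h n ⟨fun i => (f i : X), hfib, fun i j hij => ?_⟩
      have hmem : ((i, j) : Fin (m + 1) × Fin (m + 1)) ∈ P := by
        rw [hP, Finset.mem_filter]
        exact ⟨Finset.mem_univ _, hij⟩
      have hle : ε ≤ dist (f i : X) (f j : X) := Finset.inf'_le _ hmem
      calc (1 : ℝ) / (n + 1) ≤ ε := le_of_lt hn
        _ ≤ _ := hle
  have hGJ : IsGδ {y : Y | Cardinal.mk (π ⁻¹' {y}) ≤ m} := by
    rw [hJ]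
    exact .iInter fun n => ((badSet_isClosed π hπ m _).isOpen_compl).isGδ
  refine ⟨hGJ, ?_, rfl⟩
  have heq : {x : X | Cardinal.mk (π ⁻¹' {π x}) ≤ m} =
      ⋂ n : ℕ, (π ⁻¹' B n)ᶜ := by
    have : {x : X | Cardinal.mk (π ⁻¹' {π x}) ≤ m} =
        π ⁻¹' {y : Y | Cardinal.mk (π ⁻¹' {y}) ≤ m} := rfl
    rw [this, hJ, preimage_iInter]
    simp [preimage_compl]
  rw [heq]
  exact .iInter fun n =>
    (((badSet_isClosed π hπ m _).isOpen_compl).preimage hπ).isGδ
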